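/- Let A : ℝ → ℝ be twice continuously differentiable and satisfy A''(y) + (y²/16) A(y) = (y/4) A(y)³ − (3/16) A(y)⁵ for all y ∈ ℝ. Fix φ₀ ∈ ℝ and define φ(y) = φ₀ + y²/8 − (3/4) ∫₀^y A(s)² ds and Q(y) = A(y) e^{i φ(y)}. Then Q is twice continuously differentiable and satisfies Q''(y) − (i/4) Q(y) − (i/2) y Q'(y) + i (d/dy)(|Q(y)|² Q(y)) = 0 for every y ∈ ℝ. -/

import Mathlib

open Complex

private lemma key_alg (a b c y : ℝ)
    (h : c + y ^ 2 / 16 * a = y / 4 * a ^ 3 - 3 / 16 * a ^ 5) :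
    (((c : ℂ) + I * (((1/4 - 3/2 * a * b : ℝ) : ℂ) * a + ((y/4 - 3/4 * a^2 : ℝ) : ℂ) * b))
        + ((b : ℂ) + I * ((y/4 - 3/4 * a^2 : ℝ) : ℂ) * a) * (I * ((y/4 - 3/4 * a^2 : ℝ) : ℂ)))
      - (I / 4) * ((a : ℂ))
      - (I / 2) * (y : ℂ) * ((b : ℂ) + I * ((y/4 - 3/4 * a^2 : ℝ) : ℂ) * a)
      + I * ((3 * (a : ℂ) ^ 2 * (b : ℂ)) + I * (a : ℂ) ^ 3 * ((y/4 - 3/4 * a^2 : ℝ) : ℂ)) = 0 := by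
  have hc : (c : ℂ) + (y : ℂ) ^ 2 / 16 * (a : ℂ)
      = (y : ℂ) / 4 * (a : ℂ) ^ 3 - 3 / 16 * (a : ℂ) ^ 5 := by
    have := congrArg Complex.ofReal h
    push_cast at this
    exact this
  push_cast
  linear_combination hc +
    ((a:ℂ) * ((y:ℂ)/4 - 3/4*(a:ℂ)^2)^2 - (y:ℂ)/2*(a:ℂ)*((y:ℂ)/4 - 3/4*(a:ℂ)^2)
      + (a:ℂ)^3*((y:ℂ)/4 - 3/4*(a:ℂ)^2)) * Complex.I_sq

theorem stmt_4 (A : ℝ → ℝ) (hA : ContDiff ℝ 2 A)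
    (hODE : ∀ y : ℝ,
      deriv (deriv A) y + y ^ 2 / 16 * A y = y / 4 * A y ^ 3 - 3 / 16 * A y ^ 5)
    (φ₀ : ℝ) (φ : ℝ → ℝ) (Q : ℝ → ℂ)
    (hφ : ∀ y : ℝ, φ y = φ₀ + y ^ 2 / 8 - 3 / 4 * ∫ s in (0 : ℝ)..y, A s ^ 2)
    (hQ : ∀ y : ℝ, Q y = (A y : ℂ) * Complex.exp (Complex.I * (φ y : ℂ))) :
    ContDiff ℝ 2 Q ∧
    ∀ y : ℝ,
      deriv (deriv Q) y - (Complex.I / 4) * Q y - (Complex.I / 2) * (y : ℂ) * deriv Q y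
        + Complex.I * deriv (fun z : ℝ => ((‖Q z‖ ^ 2 : ℝ) : ℂ) * Q z) y = 0 := by
  have h21 : (2 : WithTop ℕ∞) = 1 + 1 := rfl
  have hA2 := hA
  have hA' : Differentiable ℝ A ∧ ContDiff ℝ 1 (deriv A) := by
    rw [h21, contDiff_succ_iff_deriv] at hA2
    exact ⟨hA2.1, hA2.2.2⟩
  have hAd : ∀ y, HasDerivAt A (deriv A y) y := fun y => (hA'.1 y).hasDerivAt
  have hBd : ∀ y, HasDerivAt (deriv A) (deriv (deriv A) y) y :=
    fun y => ((hA'.2.differentiable one_ne_zero) y).hasDerivAt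
  have hA2c : Continuous fun s => A s ^ 2 := (hA'.1.continuous.pow 2)
  have hφfun : φ = fun y => φ₀ + y ^ 2 / 8 - 3 / 4 * ∫ s in (0 : ℝ)..y, A s ^ 2 := funext hφ
  have hφd : ∀ y, HasDerivAt φ (y / 4 - 3 / 4 * A y ^ 2) y := by
    intro y
    rw [hφfun]
    have h1 : HasDerivAt (fun y : ℝ => φ₀ + y ^ 2 / 8) (y / 4) y := by
      have := (((hasDerivAt_pow 2 y)).div_const 8).const_add φ₀
      refine this.congr_deriv ?_
      push_cast; ring
    have h2 : HasDerivAt (fun u : ℝ => ∫ s in (0 : ℝ)..u, A s ^ 2) (A y ^ 2) y :=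
      (hA2c.integral_hasStrictDerivAt 0 y).hasDerivAt
    exact h1.sub (h2.const_mul (3 / 4))
  have hφC2 : ContDiff ℝ 2 φ := by
    rw [h21, contDiff_succ_iff_deriv]
    refine ⟨fun y => (hφd y).differentiableAt, by simp, ?_⟩
    have : deriv φ = fun y => y / 4 - 3 / 4 * A y ^ 2 := funext fun y => (hφd y).deriv
    rw [this]
    exact (contDiff_id.div_const 4).sub (contDiff_const.mul ((hA.of_le (by norm_num)).pow 2))
  have hQfun : Q = fun y => (A y : ℂ) * Complex.exp (Complex.I * (φ y : ℂ)) := funext hQ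
  have hQC2 : ContDiff ℝ 2 Q := by
    rw [hQfun]
    exact (Complex.ofRealCLM.contDiff.comp hA).mul
      ((contDiff_const.mul (Complex.ofRealCLM.contDiff.comp hφC2)).cexp)
  refine ⟨hQC2, fun y => ?_⟩
  -- derivative of the exponential factor
  have hE : ∀ y : ℝ, HasDerivAt (fun u : ℝ => Complex.exp (Complex.I * (φ u : ℂ)))
      (Complex.exp (Complex.I * (φ y : ℂ)) * (Complex.I * ((y / 4 - 3 / 4 * A y ^ 2 : ℝ) : ℂ))) y :=
    fun y => (((hφd y).ofReal_comp).const_mul Complex.I).cexp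
  -- first derivative of Q
  have hQd : ∀ y : ℝ, HasDerivAt Q
      ((((deriv A y : ℝ) : ℂ) + Complex.I * ((y / 4 - 3 / 4 * A y ^ 2 : ℝ) : ℂ) * (A y : ℂ))
        * Complex.exp (Complex.I * (φ y : ℂ))) y := by
    intro y
    rw [hQfun]
    have := ((hAd y).ofReal_comp).mul (hE y)
    refine this.congr_deriv ?_
    ring
  have hderivQ : deriv Q = fun y =>
      ((((deriv A y : ℝ) : ℂ) + Complex.I * ((y / 4 - 3 / 4 * A y ^ 2 : ℝ) : ℂ) * (A y : ℂ))
        * Complex.exp (Complex.I * (φ y : ℂ))) := funext fun y => (hQd y).deriv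
  -- derivative of the phase-derivative function
  have hφdd : HasDerivAt (fun u : ℝ => u / 4 - 3 / 4 * A u ^ 2)
      (1 / 4 - 3 / 2 * A y * deriv A y) y := by
    have := ((hasDerivAt_id y).div_const 4).sub (((hAd y).pow 2).const_mul (3 / 4))
    refine this.congr_deriv ?_
    push_cast; ring
  -- second derivative of Q
  have hF : HasDerivAt (fun u : ℝ =>
      (((deriv A u : ℝ) : ℂ) + Complex.I * ((u / 4 - 3 / 4 * A u ^ 2 : ℝ) : ℂ) * (A u : ℂ)))
      (((deriv (deriv A) y : ℝ) : ℂ)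
        + (Complex.I * ((1 / 4 - 3 / 2 * A y * deriv A y : ℝ) : ℂ) * ((A y : ℝ) : ℂ)
          + Complex.I * ((y / 4 - 3 / 4 * A y ^ 2 : ℝ) : ℂ) * ((deriv A y : ℝ) : ℂ))) y := by
    have h1 := (hBd y).ofReal_comp
    have h2 := ((hφdd.ofReal_comp).const_mul Complex.I).mul ((hAd y).ofReal_comp)
    exact h1.add h2
  have hQdd : deriv (deriv Q) y =
      ((((deriv (deriv A) y : ℝ) : ℂ)
        + (Complex.I * ((1 / 4 - 3 / 2 * A y * deriv A y : ℝ) : ℂ) * ((A y : ℝ) : ℂ)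
          + Complex.I * ((y / 4 - 3 / 4 * A y ^ 2 : ℝ) : ℂ) * ((deriv A y : ℝ) : ℂ)))
        * Complex.exp (Complex.I * (φ y : ℂ))
        + (((deriv A y : ℝ) : ℂ) + Complex.I * ((y / 4 - 3 / 4 * A y ^ 2 : ℝ) : ℂ) * (A y : ℂ))
          * (Complex.exp (Complex.I * (φ y : ℂ))
            * (Complex.I * ((y / 4 - 3 / 4 * A y ^ 2 : ℝ) : ℂ)))) := by
    have h : HasDerivAt (deriv Q)
        (((((deriv (deriv A) y : ℝ) : ℂ)
          + (Complex.I * ((1 / 4 - 3 / 2 * A y * deriv A y : ℝ) : ℂ) * ((A y : ℝ) : ℂ)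
            + Complex.I * ((y / 4 - 3 / 4 * A y ^ 2 : ℝ) : ℂ) * ((deriv A y : ℝ) : ℂ)))
          * Complex.exp (Complex.I * (φ y : ℂ))
          + (((deriv A y : ℝ) : ℂ) + Complex.I * ((y / 4 - 3 / 4 * A y ^ 2 : ℝ) : ℂ) * (A y : ℂ))
            * (Complex.exp (Complex.I * (φ y : ℂ))
              * (Complex.I * ((y / 4 - 3 / 4 * A y ^ 2 : ℝ) : ℂ))))) y := by
      rw [hderivQ]; exact hF.mul (hE y)
    exact h.deriv
  -- the nonlinear term
  have hNfun : (fun z : ℝ => ((‖Q z‖ ^ 2 : ℝ) : ℂ) * Q z)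
      = fun z => ((A z ^ 3 : ℝ) : ℂ) * Complex.exp (Complex.I * (φ z : ℂ)) := by
    funext z
    have hnorm : ‖Q z‖ ^ 2 = A z ^ 2 := by
      rw [hQ z]
      simp [Complex.norm_exp, _root_.sq_abs]
    rw [hnorm, hQ z]
    push_cast
    ring
  have hNd : deriv (fun z : ℝ => ((‖Q z‖ ^ 2 : ℝ) : ℂ) * Q z) y =
      (((3 : ℕ) * A y ^ (3 - 1) * deriv A y : ℝ) : ℂ)
          * Complex.exp (Complex.I * (φ y : ℂ))
        + ((A y ^ 3 : ℝ) : ℂ) * (Complex.exp (Complex.I * (φ y : ℂ))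
            * (Complex.I * ((y / 4 - 3 / 4 * A y ^ 2 : ℝ) : ℂ))) := by
    rw [hNfun]
    exact ((((hAd y).pow 3).ofReal_comp).mul (hE y)).deriv
  rw [hQdd, hNd, hderivQ, hQ y]
  have hk := key_alg (A y) (deriv A y) (deriv (deriv A) y) y (hODE y)
  push_cast at hk ⊢
  linear_combination Complex.exp (Complex.I * (φ y : ℂ)) * hk
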